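/- Let Ω be a finite probability space, M ≥ 2, and X_1, …, X_M random variables with X_i taking values in a finite type A_i, such that the joint probability P(X_1 = x_1, …, X_M = x_M) is strictly positive for every tuple (x_1, …, x_M) ∈ A_1 × ⋯ × A_M. Let Θ : {2, …, M} → {1, …, M} be a parent assignment, and define the tree-structured approximation q(x_1, …, x_M) = P(X_1 = x_1) · ∏_{i=2}^{M} P(X_i = x_i ∣ X_{Θ(i)} = x_{Θ(i)}). Then the Kullback–Leibler divergence D(p‖q) = Σ_x P(X = x) · log( P(X = x) / q(x) ) satisfies D(p‖q) = Σ_{i=1}^{M} H(X_i) − H(X_1, …, X_M) − Σ_{i=2}^{M} I(X_i ; X_{Θ(i)}). -/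

import Mathlib

open scoped Classical

/-- Probability of an event `p` under the pmf `w` on a finite sample space. -/
noncomputable def pr {Ω : Type*} [Fintype Ω] (w : Ω → ℝ) (p : Ω → Prop) : ℝ :=
  ∑ ω : Ω, if p ω then w ω else 0

/-- Mutual information `I(X;Y)` (terms with zero joint probability vanish since `0 * log _ = 0`). -/
noncomputable def mutualInfo {Ω A B : Type*} [Fintype Ω] [Fintype A] [Fintype B]
    (w : Ω → ℝ) (X : Ω → A) (Y : Ω → B) : ℝ :=
  ∑ a : A, ∑ b : B,
    pr w (fun ω => X ω = a ∧ Y ω = b) *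
      Real.log (pr w (fun ω => X ω = a ∧ Y ω = b) /
        (pr w (fun ω => X ω = a) * pr w (fun ω => Y ω = b)))

/-- Entropy `H(X)` (terms with zero probability vanish since `0 * log 0 = 0`). -/
noncomputable def entropy {Ω A : Type*} [Fintype Ω] [Fintype A]
    (w : Ω → ℝ) (X : Ω → A) : ℝ :=
  -∑ a : A, pr w (fun ω => X ω = a) * Real.log (pr w (fun ω => X ω = a))

lemma pr_congr {Ω : Type*} [Fintype Ω] (w : Ω → ℝ) {p q : Ω → Prop}
    (h : ∀ ω, p ω ↔ q ω) : pr w p = pr w q :=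
  Finset.sum_congr rfl fun ω _ => if_congr (h ω) rfl rfl

lemma pr_mono {Ω : Type*} [Fintype Ω] {w : Ω → ℝ} (hw0 : ∀ ω, 0 ≤ w ω)
    {p q : Ω → Prop} (h : ∀ ω, p ω → q ω) : pr w p ≤ pr w q := by
  refine Finset.sum_le_sum fun ω _ => ?_
  by_cases hp : p ω
  · simp [hp, h ω hp]
  · simp only [hp, if_false]
    split
    · exact hw0 ω
    · exact le_rfl

lemma pr_sum {Ω : Type*} [Fintype Ω] (w : Ω → ℝ) {B : Type*} [Fintype B]
    (Z : Ω → B) (f : B → ℝ) :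
    ∑ b : B, pr w (fun ω => Z ω = b) * f b = ∑ ω : Ω, w ω * f (Z ω) := by
  unfold pr
  simp_rw [Finset.sum_mul, ite_mul, zero_mul]
  rw [Finset.sum_comm]
  refine Finset.sum_congr rfl fun ω _ => ?_
  rw [Finset.sum_eq_single (Z ω)]
  · simp
  · intro b _ hb
    exact if_neg fun h => hb h.symm
  · intro h; exact absurd (Finset.mem_univ _) h

lemma entropy_eq_sum {Ω A : Type*} [Fintype Ω] [Fintype A] (w : Ω → ℝ) (X : Ω → A) :
    entropy w X = -∑ ω : Ω, w ω * Real.log (pr w (fun ω' => X ω' = X ω)) := by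
  unfold entropy
  congr 1
  exact pr_sum w X (fun a => Real.log (pr w (fun ω' => X ω' = a)))

lemma mutualInfo_eq_sum {Ω A B : Type*} [Fintype Ω] [Fintype A] [Fintype B]
    (w : Ω → ℝ) (X : Ω → A) (Y : Ω → B) :
    mutualInfo w X Y = ∑ ω : Ω, w ω *
      Real.log (pr w (fun ω' => X ω' = X ω ∧ Y ω' = Y ω) /
        (pr w (fun ω' => X ω' = X ω) * pr w (fun ω' => Y ω' = Y ω))) := by
  have h : (∑ ab : A × B, pr w (fun ω => (X ω, Y ω) = ab) *
      Real.log (pr w (fun ω' => X ω' = ab.1 ∧ Y ω' = ab.2) /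
        (pr w (fun ω' => X ω' = ab.1) * pr w (fun ω' => Y ω' = ab.2))))
      = ∑ ω : Ω, w ω * Real.log (pr w (fun ω' => X ω' = X ω ∧ Y ω' = Y ω) /
          (pr w (fun ω' => X ω' = X ω) * pr w (fun ω' => Y ω' = Y ω))) :=
    pr_sum w (fun ω => (X ω, Y ω)) (fun ab =>
      Real.log (pr w (fun ω' => X ω' = ab.1 ∧ Y ω' = ab.2) /
        (pr w (fun ω' => X ω' = ab.1) * pr w (fun ω' => Y ω' = ab.2))))
  unfold mutualInfo
  rw [← h, Fintype.sum_prod_type]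
  refine Finset.sum_congr rfl fun a _ => Finset.sum_congr rfl fun b _ => ?_
  have hpr : pr w (fun ω => X ω = a ∧ Y ω = b) = pr w (fun ω => (X ω, Y ω) = (a, b)) :=
    pr_congr w fun ω => by simp [Prod.ext_iff]
  rw [hpr]

lemma lhs_eq_sum {Ω : Type*} [Fintype Ω] (w : Ω → ℝ) {M : ℕ} {A : Fin M → Type*}
    [∀ i, Fintype (A i)] (X : ∀ i, Ω → A i) (f : (∀ i, A i) → ℝ) :
    ∑ x : ∀ i, A i, pr w (fun ω => ∀ i, X i ω = x i) * f x
      = ∑ ω : Ω, w ω * f (fun i => X i ω) := by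
  rw [← pr_sum w (fun ω i => X i ω) f]
  exact Finset.sum_congr rfl fun x _ => by
    rw [pr_congr w (fun ω => (funext_iff (f := fun i => X i ω) (g := x)).symm)]

lemma log_tree_identity {M : ℕ} (i0 : Fin M) (Θ : Fin M → Fin M)
    (p : ℝ) (Q R : Fin M → ℝ) (hp : 0 < p) (hQ : ∀ i, 0 < Q i) (hR : ∀ i, 0 < R i) :
    Real.log (p / (Q i0 * ∏ i ∈ Finset.univ.filter (fun i : Fin M => i ≠ i0), R i / Q (Θ i)))
      = -(∑ i : Fin M, Real.log (Q i)) + Real.log p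
        - ∑ i ∈ Finset.univ.filter (fun i : Fin M => i ≠ i0),
            Real.log (R i / (Q i * Q (Θ i))) := by
  classical
  set s := Finset.univ.filter (fun i : Fin M => i ≠ i0) with hs
  have hprodpos : 0 < ∏ i ∈ s, R i / Q (Θ i) :=
    Finset.prod_pos fun i _ => div_pos (hR i) (hQ (Θ i))
  rw [Real.log_div hp.ne' (mul_pos (hQ i0) hprodpos).ne',
    Real.log_mul (hQ i0).ne' hprodpos.ne',
    Real.log_prod (fun i _ => (div_pos (hR i) (hQ (Θ i))).ne')]
  have e1 : ∑ i ∈ s, Real.log (R i / Q (Θ i))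
      = ∑ i ∈ s, Real.log (R i) - ∑ i ∈ s, Real.log (Q (Θ i)) := by
    rw [← Finset.sum_sub_distrib]
    exact Finset.sum_congr rfl fun i _ => Real.log_div (hR i).ne' (hQ (Θ i)).ne'
  have e2 : ∑ i ∈ s, Real.log (R i / (Q i * Q (Θ i)))
      = ∑ i ∈ s, Real.log (R i) - ∑ i ∈ s, Real.log (Q i) - ∑ i ∈ s, Real.log (Q (Θ i)) := by
    rw [← Finset.sum_sub_distrib, ← Finset.sum_sub_distrib]
    refine Finset.sum_congr rfl fun i _ => ?_
    rw [Real.log_div (hR i).ne' (mul_pos (hQ i) (hQ (Θ i))).ne',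
      Real.log_mul (hQ i).ne' (hQ (Θ i)).ne']
    ring
  have e3 : ∑ i : Fin M, Real.log (Q i) = Real.log (Q i0) + ∑ i ∈ s, Real.log (Q i) := by
    rw [← Finset.sum_filter_add_sum_filter_not Finset.univ (fun i : Fin M => i ≠ i0)
      (fun i => Real.log (Q i)), add_comm]
    congr 1
    have hfe : Finset.univ.filter (fun i : Fin M => ¬ i ≠ i0) = {i0} := by
      ext j; simp
    rw [hfe, Finset.sum_singleton]
  rw [e1, e2, e3]
  ring

theorem kl_aux {Ω : Type*} [Fintype Ω] (w : Ω → ℝ) (hw0 : ∀ ω, 0 ≤ w ω)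
    {M : ℕ} {A : Fin M → Type*} [∀ i, Fintype (A i)] (X : ∀ i, Ω → A i)
    (hpos : ∀ x : ∀ i, A i, 0 < pr w (fun ω => ∀ i, X i ω = x i))
    (Θ : Fin M → Fin M) (i0 : Fin M) :
    (∑ x : ∀ i, A i,
        pr w (fun ω => ∀ i, X i ω = x i) *
          Real.log (pr w (fun ω => ∀ i, X i ω = x i) /
            (pr w (fun ω => X i0 ω = x i0) *
              ∏ i ∈ Finset.univ.filter (fun i : Fin M => i ≠ i0),
                pr w (fun ω => X i ω = x i ∧ X (Θ i) ω = x (Θ i)) /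
                  pr w (fun ω => X (Θ i) ω = x (Θ i)))))
      = (∑ i : Fin M, entropy w (X i)) - entropy w (fun ω => fun i => X i ω)
        - ∑ i ∈ Finset.univ.filter (fun i : Fin M => i ≠ i0),
            mutualInfo w (X i) (X (Θ i)) := by
  classical
  have hQ : ∀ (ω : Ω) (i : Fin M), 0 < pr w (fun ω' => X i ω' = X i ω) := fun ω i =>
    lt_of_lt_of_le (hpos (fun j => X j ω)) (pr_mono hw0 fun ω' h => h i)
  have hR : ∀ (ω : Ω) (i : Fin M),
      0 < pr w (fun ω' => X i ω' = X i ω ∧ X (Θ i) ω' = X (Θ i) ω) := fun ω i =>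
    lt_of_lt_of_le (hpos (fun j => X j ω)) (pr_mono hw0 fun ω' h => ⟨h i, h (Θ i)⟩)
  have hL : (∑ x : ∀ i, A i,
        pr w (fun ω => ∀ i, X i ω = x i) *
          Real.log (pr w (fun ω => ∀ i, X i ω = x i) /
            (pr w (fun ω => X i0 ω = x i0) *
              ∏ i ∈ Finset.univ.filter (fun i : Fin M => i ≠ i0),
                pr w (fun ω => X i ω = x i ∧ X (Θ i) ω = x (Θ i)) /
                  pr w (fun ω => X (Θ i) ω = x (Θ i)))))
      = ∑ ω : Ω, w ω *
          Real.log (pr w (fun ω' => ∀ i, X i ω' = X i ω) /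
            (pr w (fun ω' => X i0 ω' = X i0 ω) *
              ∏ i ∈ Finset.univ.filter (fun i : Fin M => i ≠ i0),
                pr w (fun ω' => X i ω' = X i ω ∧ X (Θ i) ω' = X (Θ i) ω) /
                  pr w (fun ω' => X (Θ i) ω' = X (Θ i) ω))) :=
    lhs_eq_sum w X (fun x =>
      Real.log (pr w (fun ω => ∀ i, X i ω = x i) /
        (pr w (fun ω => X i0 ω = x i0) *
          ∏ i ∈ Finset.univ.filter (fun i : Fin M => i ≠ i0),
            pr w (fun ω => X i ω = x i ∧ X (Θ i) ω = x (Θ i)) /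
              pr w (fun ω => X (Θ i) ω = x (Θ i)))))
  have h1 : ∑ i : Fin M, entropy w (X i)
      = -∑ ω : Ω, w ω * ∑ i : Fin M, Real.log (pr w (fun ω' => X i ω' = X i ω)) := by
    simp only [entropy_eq_sum, Finset.mul_sum]
    rw [Finset.sum_comm]
    exact Finset.sum_neg_distrib _
  have h2 : entropy w (fun ω => fun i => X i ω)
      = -∑ ω : Ω, w ω * Real.log (pr w (fun ω' => ∀ i, X i ω' = X i ω)) := by
    have hj : ∀ ω : Ω, pr w (fun ω' => (fun i => X i ω') = (fun i => X i ω))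
        = pr w (fun ω' => ∀ i, X i ω' = X i ω) :=
      fun ω => pr_congr w fun ω' => funext_iff
    rw [entropy_eq_sum w (fun ω i => X i ω)]
    congr 1
    refine Finset.sum_congr rfl fun ω _ => ?_
    rw [show pr w (fun ω' => (fun i => X i ω') = (fun i => X i ω))
        = pr w (fun ω' => ∀ i, X i ω' = X i ω) from hj ω]
  have h3 : ∑ i ∈ Finset.univ.filter (fun i : Fin M => i ≠ i0), mutualInfo w (X i) (X (Θ i))
      = ∑ ω : Ω, w ω * ∑ i ∈ Finset.univ.filter (fun i : Fin M => i ≠ i0),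
          Real.log (pr w (fun ω' => X i ω' = X i ω ∧ X (Θ i) ω' = X (Θ i) ω) /
            (pr w (fun ω' => X i ω' = X i ω) * pr w (fun ω' => X (Θ i) ω' = X (Θ i) ω))) := by
    simp only [mutualInfo_eq_sum, Finset.mul_sum]
    exact Finset.sum_comm
  rw [hL, h1, h2, h3]
  have hper : ∀ ω : Ω,
      w ω * Real.log (pr w (fun ω' => ∀ i, X i ω' = X i ω) /
        (pr w (fun ω' => X i0 ω' = X i0 ω) *
          ∏ i ∈ Finset.univ.filter (fun i : Fin M => i ≠ i0),
            pr w (fun ω' => X i ω' = X i ω ∧ X (Θ i) ω' = X (Θ i) ω) /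
              pr w (fun ω' => X (Θ i) ω' = X (Θ i) ω)))
      = w ω * Real.log (pr w (fun ω' => ∀ i, X i ω' = X i ω))
        - w ω * ∑ i : Fin M, Real.log (pr w (fun ω' => X i ω' = X i ω))
        - w ω * ∑ i ∈ Finset.univ.filter (fun i : Fin M => i ≠ i0),
            Real.log (pr w (fun ω' => X i ω' = X i ω ∧ X (Θ i) ω' = X (Θ i) ω) /
              (pr w (fun ω' => X i ω' = X i ω) * pr w (fun ω' => X (Θ i) ω' = X (Θ i) ω))) := by
    intro ω
    have key : Real.log (pr w (fun ω' => ∀ i, X i ω' = X i ω) /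
        (pr w (fun ω' => X i0 ω' = X i0 ω) *
          ∏ i ∈ Finset.univ.filter (fun i : Fin M => i ≠ i0),
            pr w (fun ω' => X i ω' = X i ω ∧ X (Θ i) ω' = X (Θ i) ω) /
              pr w (fun ω' => X (Θ i) ω' = X (Θ i) ω)))
        = -(∑ i : Fin M, Real.log (pr w (fun ω' => X i ω' = X i ω)))
          + Real.log (pr w (fun ω' => ∀ i, X i ω' = X i ω))
          - ∑ i ∈ Finset.univ.filter (fun i : Fin M => i ≠ i0),
              Real.log (pr w (fun ω' => X i ω' = X i ω ∧ X (Θ i) ω' = X (Θ i) ω) /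
                (pr w (fun ω' => X i ω' = X i ω) * pr w (fun ω' => X (Θ i) ω' = X (Θ i) ω))) :=
      log_tree_identity i0 Θ _ (fun i => pr w (fun ω' => X i ω' = X i ω))
        (fun i => pr w (fun ω' => X i ω' = X i ω ∧ X (Θ i) ω' = X (Θ i) ω))
        (hpos (fun j => X j ω)) (hQ ω) (hR ω)
    rw [key]
    ring
  calc (∑ ω : Ω, w ω * Real.log (pr w (fun ω' => ∀ i, X i ω' = X i ω) /
        (pr w (fun ω' => X i0 ω' = X i0 ω) *
          ∏ i ∈ Finset.univ.filter (fun i : Fin M => i ≠ i0),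
            pr w (fun ω' => X i ω' = X i ω ∧ X (Θ i) ω' = X (Θ i) ω) /
              pr w (fun ω' => X (Θ i) ω' = X (Θ i) ω))))
      = ∑ ω : Ω, (w ω * Real.log (pr w (fun ω' => ∀ i, X i ω' = X i ω))
          - w ω * ∑ i : Fin M, Real.log (pr w (fun ω' => X i ω' = X i ω))
          - w ω * ∑ i ∈ Finset.univ.filter (fun i : Fin M => i ≠ i0),
              Real.log (pr w (fun ω' => X i ω' = X i ω ∧ X (Θ i) ω' = X (Θ i) ω) /
                (pr w (fun ω' => X i ω' = X i ω) * pr w (fun ω' => X (Θ i) ω' = X (Θ i) ω)))) :=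
        Finset.sum_congr rfl fun ω _ => hper ω
    _ = (∑ ω : Ω, w ω * Real.log (pr w (fun ω' => ∀ i, X i ω' = X i ω)))
          - (∑ ω : Ω, w ω * ∑ i : Fin M, Real.log (pr w (fun ω' => X i ω' = X i ω)))
          - ∑ ω : Ω, w ω * ∑ i ∈ Finset.univ.filter (fun i : Fin M => i ≠ i0),
              Real.log (pr w (fun ω' => X i ω' = X i ω ∧ X (Θ i) ω' = X (Θ i) ω) /
                (pr w (fun ω' => X i ω' = X i ω) * pr w (fun ω' => X (Θ i) ω' = X (Θ i) ω))) := by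
        rw [Finset.sum_sub_distrib, Finset.sum_sub_distrib]
    _ = _ := by ring

/-- For a strictly positive joint distribution of `X_1, …, X_M` (indexed here by
`Fin M`, with index `0` playing the role of `X_1`) and a parent assignment `Θ` on the non-root
nodes, the KL divergence between the joint distribution and the tree-structured approximation
`q(x) = P(X_0 = x_0) ∏_{i ≠ 0} P(X_i = x_i ∣ X_{Θ i} = x_{Θ i})` equals
`∑_i H(X_i) − H(X_1, …, X_M) − ∑_{i ≠ 0} I(X_i ; X_{Θ i})`. -/
theorem kl_tree_approximation_eq
    {Ω : Type*} [Fintype Ω] (w : Ω → ℝ)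
    (hw0 : ∀ ω, 0 ≤ w ω) (hw1 : ∑ ω : Ω, w ω = 1)
    (M : ℕ) (hM : 2 ≤ M)
    (A : Fin M → Type*) [∀ i, Fintype (A i)]
    (X : ∀ i, Ω → A i)
    (hpos : ∀ x : ∀ i, A i, 0 < pr w (fun ω => ∀ i, X i ω = x i))
    (Θ : Fin M → Fin M) :
    (∑ x : ∀ i, A i,
        pr w (fun ω => ∀ i, X i ω = x i) *
          Real.log (pr w (fun ω => ∀ i, X i ω = x i) /
            (pr w (fun ω => X ⟨0, by omega⟩ ω = x ⟨0, by omega⟩) *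
              ∏ i ∈ Finset.univ.filter (fun i : Fin M => i ≠ ⟨0, by omega⟩),
                pr w (fun ω => X i ω = x i ∧ X (Θ i) ω = x (Θ i)) /
                  pr w (fun ω => X (Θ i) ω = x (Θ i)))))
      = (∑ i : Fin M, entropy w (X i)) - entropy w (fun ω => fun i => X i ω)
          - ∑ i ∈ Finset.univ.filter (fun i : Fin M => i ≠ ⟨0, by omega⟩),
              mutualInfo w (X i) (X (Θ i)) := by
  exact kl_aux w hw0 X hpos Θ ⟨0, by omega⟩
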